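/- Let K be an omega-Dini Calderon-Zygmund convolution kernel: |K(x)| <= C_K/|x|^n, |K(x-y) - K(x)| <= omega(|y|/|x|)/|x|^n for 2|y| <= |x|, with the annulus cancellation condition. Then the truncated Fourier transforms are uniformly bounded: for all k in Z and xi, |integral over {2^k < |x|} of K(x) e^{-2 pi i x . xi} dx| <= c_n (C_K + ||omega||_Dini), where ||omega||_Dini = integral_0^1 omega(t) dt/t. -/

import Mathlib

set_option maxHeartbeats 1000000

open MeasureTheory Real
open scoped ENNReal RealInnerProductSpace

noncomputable section

/-- The Dini norm `‖ω‖_Dini = ∫₀¹ ω(t) dt/t`. -/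
def diniNorm (ω : ℝ → ℝ) : ℝ := ∫ t in Set.Ioo (0 : ℝ) 1, ω t / t

lemma norm_exp_mul_I_sub_one_le (θ : ℝ) : ‖Complex.exp (θ * Complex.I) - 1‖ ≤ |θ| := by
  have h : Complex.exp ((θ : ℂ) * Complex.I) - 1 =
      Complex.ofReal (Real.cos θ - 1) + Complex.ofReal (Real.sin θ) * Complex.I := by
    rw [Complex.exp_mul_I, ← Complex.ofReal_cos, ← Complex.ofReal_sin]
    push_cast
    ring
  rw [h, Complex.norm_add_mul_I,
    show |θ| = Real.sqrt (θ ^ 2) by rw [Real.sqrt_sq_eq_abs]]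
  apply Real.sqrt_le_sqrt
  nlinarith [Real.sin_sq_add_cos_sq θ, Real.one_sub_sq_div_two_le_cos (x := θ)]

lemma dini_aux {ω : ℝ → ℝ} (hint : IntegrableOn (fun t => ω t / t) (Set.Ioo (0:ℝ) 1))
    (hnn : ∀ t ∈ Set.Ioo (0:ℝ) 1, 0 ≤ ω t / t)
    {b M : ℝ} (hb : 0 < b) (hM : 0 < M) (hbM : b / M ≤ 1) (N : ℝ) :
    ∫ r in Set.Ioo M N, ω (b / r) / r ≤ diniNorm ω := by
  have hdn : 0 ≤ diniNorm ω := setIntegral_nonneg measurableSet_Ioo hnn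
  rcases le_or_gt N M with h | h
  · rw [Set.Ioo_eq_empty (by exact fun h' => absurd h (not_le.mpr h'))]
    simp [hdn]
  · have hN : 0 < N := hM.trans h
    have hbN : 0 < b / N := div_pos hb hN
    have hbMpos : 0 < b / M := div_pos hb hM
    have himg : (fun t => b / t) '' Set.Ioo (b/N) (b/M) = Set.Ioo M N := by
      ext x
      simp only [Set.mem_image, Set.mem_Ioo]
      constructor
      · rintro ⟨t, ⟨h1, h2⟩, rfl⟩
        have ht : 0 < t := hbN.trans h1
        constructor
        · rw [lt_div_iff₀ ht]
          rw [lt_div_iff₀ hM] at h2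
          nlinarith
        · rw [div_lt_iff₀ ht]
          rw [div_lt_iff₀ hN] at h1
          nlinarith
      · rintro ⟨h1, h2⟩
        have hx : 0 < x := hM.trans h1
        refine ⟨b / x, ⟨?_, ?_⟩, by field_simp⟩
        · rw [div_lt_div_iff₀ hN hx]; nlinarith
        · rw [div_lt_div_iff₀ hx hM]; nlinarith
    have hderiv : ∀ t ∈ Set.Ioo (b/N) (b/M),
        HasDerivWithinAt (fun t => b / t) (-(b / t^2)) (Set.Ioo (b/N) (b/M)) t := by
      intro t ht
      have ht0 : t ≠ 0 := (hbN.trans ht.1).ne'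
      have : HasDerivAt (fun t => b / t) (-(b / t^2)) t := by
        simpa [div_eq_mul_inv, mul_comm, neg_div] using ((hasDerivAt_inv ht0).const_mul b)
      exact this.hasDerivWithinAt
    have hinj : Set.InjOn (fun t => b / t) (Set.Ioo (b/N) (b/M)) := by
      intro t1 h1 t2 h2 he
      have ht1 : 0 < t1 := hbN.trans h1.1
      have ht2 : 0 < t2 := hbN.trans h2.1
      field_simp at he
      linarith [he]
    rw [← himg, integral_image_eq_integral_abs_deriv_smul measurableSet_Ioo hderiv hinj
      (fun r => ω (b / r) / r)]
    have heq : ∀ t ∈ Set.Ioo (b/N) (b/M),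
        |(-(b / t^2))| • (ω (b / (b / t)) / (b / t)) = ω t / t := by
      intro t ht
      have ht0 : 0 < t := hbN.trans ht.1
      rw [abs_neg, abs_of_pos (by positivity), smul_eq_mul,
        show b / (b / t) = t by field_simp]
      field_simp
    rw [setIntegral_congr_fun measurableSet_Ioo heq]
    refine setIntegral_mono_set hint ?_ ?_
    · filter_upwards [self_mem_ae_restrict measurableSet_Ioo] with t ht
      exact hnn t ht
    · refine HasSubset.Subset.eventuallyLE ?_
      exact Set.Ioo_subset_Ioo (le_of_lt hbN) hbM

lemma radial_formula {n : ℕ} (hn : 1 ≤ n) (f : ℝ → ℝ) {s : Set ℝ} (hs : MeasurableSet s)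
    (hsub : s ⊆ Set.Ioi (0:ℝ)) :
    ∫ x in {x : EuclideanSpace ℝ (Fin n) | ‖x‖ ∈ s}, f ‖x‖ =
      (n : ℝ) * (volume (Metric.ball (0 : EuclideanSpace ℝ (Fin n)) 1)).toReal *
        ∫ r in s, r ^ (n-1) * f r := by
  haveI : Nonempty (Fin n) := Fin.pos_iff_nonempty.mp hn
  haveI : Nontrivial (EuclideanSpace ℝ (Fin n)) := by
    refine Module.nontrivial_of_finrank_pos (R := ℝ) ?_
    rw [finrank_euclideanSpace_fin]; omega
  have hmeas : MeasurableSet {x : EuclideanSpace ℝ (Fin n) | ‖x‖ ∈ s} :=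
    measurable_norm hs
  have h1 : ∫ x in {x : EuclideanSpace ℝ (Fin n) | ‖x‖ ∈ s}, f ‖x‖ =
      ∫ x : EuclideanSpace ℝ (Fin n), s.indicator f ‖x‖ := by
    rw [← integral_indicator hmeas]
    refine integral_congr_ae (Filter.Eventually.of_forall fun x => ?_)
    by_cases h : ‖x‖ ∈ s <;> simp [Set.indicator_apply, h]
  rw [h1, integral_fun_norm_addHaar volume (s.indicator f)]
  simp only [finrank_euclideanSpace_fin, nsmul_eq_mul, smul_eq_mul]
  rw [mul_assoc]
  congr 2
  have h2 : ∀ y : ℝ, y ^ (n-1) • s.indicator f y =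
      s.indicator (fun r => r ^ (n-1) * f r) y := by
    intro y
    by_cases h : y ∈ s
    · rw [Set.indicator_of_mem h, Set.indicator_of_mem h, smul_eq_mul]
    · rw [Set.indicator_of_notMem h, Set.indicator_of_notMem h, smul_zero]
  calc ∫ y in Set.Ioi (0:ℝ), y ^ (n-1) • s.indicator f y
      = ∫ y in Set.Ioi (0:ℝ), s.indicator (fun r => r ^ (n-1) * f r) y :=
        setIntegral_congr_fun measurableSet_Ioi (fun y _ => h2 y)
    _ = ∫ r in Set.Ioi (0:ℝ) ∩ s, r ^ (n-1) * f r := setIntegral_indicator hs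
    _ = ∫ r in s, r ^ (n-1) * f r := by rw [Set.inter_eq_right.mpr hsub]

lemma translate_aux {n : ℕ} {F : Type} [NormedAddCommGroup F] [NormedSpace ℝ F]
    [CompleteSpace F]
    (f : EuclideanSpace ℝ (Fin n) → F) {A : Set (EuclideanSpace ℝ (Fin n))}
    (hA : MeasurableSet A) (y : EuclideanSpace ℝ (Fin n)) (hf : IntegrableOn f A volume) :
    IntegrableOn (fun z => f (z + y)) {z | z + y ∈ A} volume ∧
      ∫ z in {z | z + y ∈ A}, f (z + y) = ∫ x in A, f x := by
  have hBmeas : MeasurableSet {z : EuclideanSpace ℝ (Fin n) | z + y ∈ A} := by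
    have h0 : {z : EuclideanSpace ℝ (Fin n) | z + y ∈ A} = (fun z => z + y) ⁻¹' A := rfl
    rw [h0]
    exact (measurable_add_const y) hA
  have hind : ∀ z, A.indicator f (z + y) =
      Set.indicator {z | z + y ∈ A} (fun w => f (w + y)) z := by
    intro z
    by_cases h : z + y ∈ A
    · rw [Set.indicator_of_mem h, Set.indicator_of_mem (by exact h)]
    · rw [Set.indicator_of_notMem h, Set.indicator_of_notMem (by exact h)]
  have h1 : Integrable (A.indicator f) volume := (integrable_indicator_iff hA).mpr hf
  have h2 : Integrable (fun z => A.indicator f (z + y)) volume := h1.comp_add_right y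
  constructor
  · rw [← integrable_indicator_iff hBmeas]
    exact h2.congr (Filter.Eventually.of_forall fun z => hind z)
  · calc ∫ z in {z | z + y ∈ A}, f (z + y)
        = ∫ z, Set.indicator {z | z + y ∈ A} (fun w => f (w + y)) z :=
          (integral_indicator hBmeas).symm
      _ = ∫ z, A.indicator f (z + y) :=
          integral_congr_ae (Filter.Eventually.of_forall fun z => (hind z).symm)
      _ = ∫ x, A.indicator f x := integral_add_right_eq_self _ y
      _ = ∫ x in A, f x := integral_indicator hA

/-- for an `ω`-Dini Calderón–Zygmund convolution kernel with annulus
cancellation, the Fourier transforms of the truncations `K χ_{{|x| > 2^k}}` are uniformly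
bounded by `c_n (C_K + ‖ω‖_Dini)`. -/
theorem truncated_fourier_uniform_bound (n : ℕ) (hn : 1 ≤ n) :
    ∃ c : ℝ, 0 < c ∧
      ∀ (K : EuclideanSpace ℝ (Fin n) → ℂ) (C_K : ℝ) (ω : ℝ → ℝ), 0 < C_K →
        (∀ t, 0 ≤ t → 0 ≤ ω t) → ω 0 = 0 →
        (∀ u t s, 0 ≤ u → 0 ≤ t → 0 ≤ s → u ≤ t + s → ω u ≤ ω t + ω s) →
        IntegrableOn (fun t => ω t / t) (Set.Ioo (0 : ℝ) 1) →
        (∀ x : EuclideanSpace ℝ (Fin n), x ≠ 0 → ‖K x‖ ≤ C_K / ‖x‖ ^ n) →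
        (∀ x y : EuclideanSpace ℝ (Fin n), x ≠ 0 → 2 * ‖y‖ ≤ ‖x‖ →
          ‖K (x - y) - K x‖ ≤ ω (‖y‖ / ‖x‖) / ‖x‖ ^ n) →
        (∀ ε R : ℝ, 0 < ε → ε < R →
          ∫ x in {x : EuclideanSpace ℝ (Fin n) | ε < ‖x‖ ∧ ‖x‖ < R}, K x = 0) →
        ∀ (k : ℤ) (ξ : EuclideanSpace ℝ (Fin n)),
          ‖∫ x in {x : EuclideanSpace ℝ (Fin n) | (2 : ℝ) ^ k < ‖x‖},
              K x * Complex.exp (-(2 * π * Complex.I) * (⟪x, ξ⟫ : ℝ))‖ ≤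
            c * (C_K + diniNorm ω) := by
  classical
  haveI : Nonempty (Fin n) := Fin.pos_iff_nonempty.mp hn
  haveI : Nontrivial (EuclideanSpace ℝ (Fin n)) := by
    refine Module.nontrivial_of_finrank_pos (R := ℝ) ?_
    rw [finrank_euclideanSpace_fin]; omega
  set V : ℝ := (volume (Metric.ball (0 : EuclideanSpace ℝ (Fin n)) 1)).toReal with hV_def
  have hV : 0 ≤ V := ENNReal.toReal_nonneg
  set c : ℝ := (n:ℝ) * V * (2*π+1) + V * 2^n + V + 1 with hc_def
  have hcpos : 0 < c := by positivity
  refine ⟨c, hcpos, ?_⟩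
  intro K C_K ω hCK hωnn hω0 hωsub hωint hsize hreg hcanc k ξ
  have hdini : 0 ≤ diniNorm ω :=
    setIntegral_nonneg measurableSet_Ioo (fun t ht => div_nonneg (hωnn t ht.1.le) ht.1.le)
  have hRHS : 0 ≤ c * (C_K + diniNorm ω) := mul_nonneg hcpos.le (by linarith)
  have hmono : ∀ a b : ℝ, 0 ≤ a → a ≤ b → ω a ≤ ω b := by
    intro a b ha hab
    have := hωsub a b 0 ha (ha.trans hab) le_rfl (by linarith)
    rwa [hω0, add_zero] at this
  set R := (2:ℝ)^k with hR_def
  have hR : 0 < R := zpow_pos (by norm_num) k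
  set S := {x : EuclideanSpace ℝ (Fin n) | R < ‖x‖} with hS_def
  have hSmeas : MeasurableSet S := (isOpen_lt continuous_const continuous_norm).measurableSet
  set e : EuclideanSpace ℝ (Fin n) → ℂ :=
    fun x => Complex.exp (-(2 * ↑π * Complex.I) * (⟪x, ξ⟫ : ℝ)) with he_def
  have harg : ∀ x : EuclideanSpace ℝ (Fin n),
      (-(2 * (π:ℂ) * Complex.I) * ((⟪x, ξ⟫ : ℝ) : ℂ)) =
        ((-(2 * π * ⟪x, ξ⟫) : ℝ) : ℂ) * Complex.I := by
    intro x; push_cast; ring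
  have hee : ∀ x, e x = Complex.exp (((-(2 * π * ⟪x, ξ⟫) : ℝ) : ℂ) * Complex.I) := by
    intro x; exact congrArg Complex.exp (harg x)
  have hnorme : ∀ x, ‖e x‖ = 1 := by
    intro x; rw [hee x, Complex.norm_exp_ofReal_mul_I]
  have hecont : Continuous e := by
    apply Complex.continuous_exp.comp
    exact continuous_const.mul
      (Complex.continuous_ofReal.comp (continuous_id.inner continuous_const))
  show ‖∫ x in S, K x * e x‖ ≤ c * (C_K + diniNorm ω)
  by_cases hInt : IntegrableOn (fun x => K x * e x) S volume
  swap
  · rw [integral_undef hInt, norm_zero]; exact hRHS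
  have hKS : IntegrableOn K S := by
    refine hInt.norm.mono' ?_ ?_
    · have h1 : Continuous fun x => (e x)⁻¹ := hecont.inv₀ (fun x => Complex.exp_ne_zero _)
      have h2 : (fun x => (K x * e x) * (e x)⁻¹) = K := by
        funext x
        have h3 : e x ≠ 0 := by rw [he_def]; exact Complex.exp_ne_zero _
        field_simp
      exact h2 ▸ hInt.aestronglyMeasurable.mul h1.aestronglyMeasurable.restrict
    · filter_upwards with x
      rw [norm_mul, hnorme, mul_one]
  by_cases hξ : ξ = 0
  · subst hξ
    have he1 : ∀ x, e x = 1 := by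
      intro x; rw [he_def]; simp
    have hzero : ∫ x in S, K x * e x = 0 := by
      simp_rw [he1, mul_one]
      set s : ℕ → Set (EuclideanSpace ℝ (Fin n)) :=
        fun N => {x | R < ‖x‖ ∧ ‖x‖ < (N:ℝ)} with hs_def
      have hsm : ∀ N, MeasurableSet (s N) := by
        intro N
        rw [hs_def]
        simp only [Set.setOf_and]
        exact ((isOpen_lt continuous_const continuous_norm).inter
          (isOpen_lt continuous_norm continuous_const)).measurableSet
      have hmono' : Monotone s := by
        intro a b hab x hx
        exact ⟨hx.1, hx.2.trans_le (by exact_mod_cast Nat.cast_le.mpr hab)⟩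
      have hunion : (⋃ N, s N) = S := by
        ext x
        simp only [Set.mem_iUnion, hs_def, Set.mem_setOf_eq, hS_def]
        constructor
        · rintro ⟨N, h1, _⟩; exact h1
        · intro h; exact ⟨⌊‖x‖⌋₊ + 1, h, by push_cast; exact Nat.lt_floor_add_one _⟩
      have htend := tendsto_setIntegral_of_monotone hsm hmono' (hunion ▸ hKS)
      rw [hunion] at htend
      have hz : ∀ N : ℕ, ∫ x in s N, K x = 0 := by
        intro N
        by_cases hRN : R < (N:ℝ)
        · exact hcanc R N hR hRN
        · have hemp : s N = ∅ := by
            rw [hs_def]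
            ext x
            simp only [Set.mem_setOf_eq, Set.mem_empty_iff_false, iff_false, not_and]
            intro h1 h2
            exact hRN (h1.trans (h2.trans_le (le_refl _))) |>.elim
          rw [hemp]
          simp
      simp_rw [hz] at htend
      exact tendsto_nhds_unique htend tendsto_const_nhds
    rw [hzero, norm_zero]; exact hRHS
  · -- main case: ξ ≠ 0
    have hν : 0 < ‖ξ‖ := norm_pos_iff.mpr hξ
    set M := max R ‖ξ‖⁻¹ with hM_def
    have hRM : R ≤ M := le_max_left _ _
    have hνM : ‖ξ‖⁻¹ ≤ M := le_max_right _ _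
    have hM0 : 0 < M := lt_of_lt_of_le (inv_pos.mpr hν) hνM
    set y : EuclideanSpace ℝ (Fin n) := (2 * ‖ξ‖^2)⁻¹ • ξ with hy_def
    have hbnorm : ‖y‖ = (2*‖ξ‖)⁻¹ := by
      rw [hy_def, norm_smul, Real.norm_eq_abs, abs_of_pos (by positivity)]
      field_simp
    have hbpos : 0 < ‖y‖ := by rw [hbnorm]; positivity
    have h2b : 2 * ‖y‖ = ‖ξ‖⁻¹ := by rw [hbnorm]; field_simp
    have hbM2 : ‖y‖ ≤ M / 2 := by
      rw [hbnorm]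
      rw [show (2*‖ξ‖)⁻¹ = ‖ξ‖⁻¹/2 by rw [mul_inv]; ring]
      linarith
    have hyξ : ⟪y, ξ⟫ = 1/2 := by
      rw [hy_def, real_inner_smul_left, real_inner_self_eq_norm_sq]
      field_simp
    have hey : ∀ x, e (x - y) = - e x := by
      intro x
      show Complex.exp (-(2 * ↑π * Complex.I) * ((⟪x - y, ξ⟫ : ℝ) : ℂ)) =
        - Complex.exp (-(2 * ↑π * Complex.I) * ((⟪x, ξ⟫ : ℝ) : ℂ))
      rw [inner_sub_left, hyξ]
      rw [show -(2 * (π:ℂ) * Complex.I) * (((⟪x, ξ⟫ - 1/2 : ℝ)) : ℂ) =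
        -(2 * (π:ℂ) * Complex.I) * ((⟪x, ξ⟫ : ℝ) : ℂ) + π * Complex.I by push_cast; ring]
      rw [Complex.exp_add, Complex.exp_pi_mul_I]
      ring
    set A1 := {x : EuclideanSpace ℝ (Fin n) | R < ‖x‖ ∧ ‖x‖ ≤ M} with hA1_def
    set A := {x : EuclideanSpace ℝ (Fin n) | M < ‖x‖} with hA_def
    set B := {z : EuclideanSpace ℝ (Fin n) | M < ‖z + y‖} with hB_def
    have hA1meas : MeasurableSet A1 := by
      rw [hA1_def, Set.setOf_and]
      exact ((isOpen_lt continuous_const continuous_norm).measurableSet).inter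
        ((isClosed_le continuous_norm continuous_const).measurableSet)
    have hAmeas : MeasurableSet A := (isOpen_lt continuous_const continuous_norm).measurableSet
    have hBmeas : MeasurableSet B :=
      (isOpen_lt continuous_const ((continuous_id.add continuous_const).norm)).measurableSet
    have hA1S : A1 ⊆ S := fun x hx => hx.1
    have hAS : A ⊆ S := fun x hx => lt_of_le_of_lt hRM hx
    have hSsplit : S = A1 ∪ A := by
      ext x
      simp only [hS_def, hA1_def, hA_def, Set.mem_setOf_eq, Set.mem_union]
      constructor
      · intro h
        rcases le_or_gt ‖x‖ M with h' | h'
        · exact Or.inl ⟨h, h'⟩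
        · exact Or.inr h'
      · rintro (⟨h, _⟩ | h)
        · exact h
        · exact lt_of_le_of_lt hRM h
    have hdisj : Disjoint A1 A := by
      rw [Set.disjoint_left]
      rintro x ⟨_, h2⟩ h3
      exact absurd h3 (not_lt.mpr h2)
    have hInt1 : IntegrableOn (fun x => K x * e x) A1 := hInt.mono_set hA1S
    have hIntA : IntegrableOn (fun x => K x * e x) A := hInt.mono_set hAS
    have hK1 : IntegrableOn K A1 := hKS.mono_set hA1S
    have hKA : IntegrableOn K A := hKS.mono_set hAS
    have hsplit : ∫ x in S, K x * e x =
        (∫ x in A1, K x * e x) + ∫ x in A, K x * e x := by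
      rw [hSsplit, setIntegral_union hdisj hAmeas hInt1 hIntA]
    have hesub1 : ∀ x : EuclideanSpace ℝ (Fin n), ‖e x - 1‖ ≤ 2*π*(‖x‖*‖ξ‖) := by
      intro x
      rw [hee x]
      refine (norm_exp_mul_I_sub_one_le _).trans ?_
      rw [abs_neg]
      calc |2 * π * ⟪x, ξ⟫| = 2 * π * |⟪x, ξ⟫| := by
            rw [abs_mul, abs_of_pos (by positivity : (0:ℝ) < 2*π)]
        _ ≤ 2 * π * (‖x‖ * ‖ξ‖) := by
            have := abs_real_inner_le_norm x ξ
            nlinarith [pi_pos]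
    -- Part 1 bound
    have hI1 : ‖∫ x in A1, K x * e x‖ ≤ 2*π*((n:ℝ)*V)*C_K := by
      have hA1K : ∫ x in A1, K x = 0 := by
        rcases eq_or_lt_of_le hRM with heq | hlt
        · have hemp : A1 = ∅ := by
            refine Set.eq_empty_iff_forall_notMem.mpr fun x hx => ?_
            have h1 : R < ‖x‖ := hx.1
            have h2 : ‖x‖ ≤ M := hx.2
            rw [← heq] at h2
            exact absurd (lt_of_lt_of_le h1 h2) (lt_irrefl R)
          rw [hemp]
          simp
        · have hsub' : {x : EuclideanSpace ℝ (Fin n) | R < ‖x‖ ∧ ‖x‖ < M} ⊆ A1 :=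
            fun x hx => ⟨hx.1, hx.2.le⟩
          have hae : A1 =ᵐ[volume] {x : EuclideanSpace ℝ (Fin n) | R < ‖x‖ ∧ ‖x‖ < M} := by
            rw [MeasureTheory.ae_eq_set]
            constructor
            · refine measure_mono_null (t := Metric.sphere (0 : EuclideanSpace ℝ (Fin n)) M)
                (fun x hx => ?_) (Measure.addHaar_sphere (μ := volume) 0 M)
              rcases hx with ⟨⟨h1, h2⟩, h3⟩
              have h4 : ¬(R < ‖x‖ ∧ ‖x‖ < M) := h3
              have h5 : ‖x‖ = M := le_antisymm h2 (by
                by_contra h6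
                exact h4 ⟨h1, lt_of_not_ge h6⟩)
              rw [mem_sphere_zero_iff_norm]
              exact h5
            · rw [Set.diff_eq_empty.mpr hsub']
              exact measure_empty
          rw [setIntegral_congr_set hae]
          exact hcanc R M hR hlt
      have hsub1 : IntegrableOn (fun x => K x * (e x - 1)) A1 := by
        refine (hInt1.sub hK1).congr (Filter.Eventually.of_forall fun x => ?_)
        simp only [Pi.sub_apply]
        ring
      have heq1 : ∫ x in A1, K x * e x = ∫ x in A1, K x * (e x - 1) := by
        have h' : ∫ x in A1, K x * e x =
            (∫ x in A1, K x * (e x - 1)) + ∫ x in A1, K x := by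
          rw [← integral_add hsub1 hK1]
          refine integral_congr_ae (Filter.Eventually.of_forall fun x => ?_)
          ring
        rw [h', hA1K, add_zero]
      rw [heq1]
      refine (norm_integral_le_integral_norm _).trans ?_
      set C0 := 2*π*‖ξ‖*C_K with hC0_def
      have hC0 : 0 ≤ C0 := by positivity
      have hψint : IntegrableOn (fun x : EuclideanSpace ℝ (Fin n) => C0 / ‖x‖^(n-1)) A1 := by
        refine Measure.integrableOn_of_bounded (M := C0 / R^(n-1)) ?_ ?_ ?_
        · refine ne_of_lt (lt_of_le_of_lt (measure_mono (fun x hx => ?_))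
            (measure_closedBall_lt_top (x := (0 : EuclideanSpace ℝ (Fin n))) (r := M)))
          rw [Metric.mem_closedBall, dist_zero_right]
          exact hx.2
        · exact (measurable_const.div (measurable_norm.pow_const (n-1))).aestronglyMeasurable
        · filter_upwards [self_mem_ae_restrict hA1meas] with x hx
          have hx1 : R < ‖x‖ := hx.1
          rw [Real.norm_eq_abs, abs_of_nonneg (by positivity)]
          exact div_le_div_of_nonneg_left hC0 (pow_pos hR _)
            (pow_le_pow_left₀ hR.le hx1.le _)
      have hnormint : IntegrableOn (fun x => ‖K x * (e x - 1)‖) A1 := hsub1.norm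
      have hmono1 : ∫ x in A1, ‖K x * (e x - 1)‖ ≤
          ∫ x in A1, C0 / ‖x‖^(n-1) := by
        refine setIntegral_mono_on hnormint hψint hA1meas fun x hx => ?_
        have hxn : 0 < ‖x‖ := hR.trans hx.1
        have hx0 : x ≠ 0 := by
          intro h0
          rw [h0, norm_zero] at hxn
          exact lt_irrefl 0 hxn
        rw [norm_mul]
        calc ‖K x‖ * ‖e x - 1‖ ≤ (C_K/‖x‖^n) * (2*π*(‖x‖*‖ξ‖)) := by
              refine mul_le_mul (hsize x hx0) (hesub1 x) (norm_nonneg _) ?_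
              positivity
          _ = C0 / ‖x‖^(n-1) := by
              have hpow : ‖x‖^n = ‖x‖^(n-1) * ‖x‖ := by
                rw [← pow_succ]
                congr 1
                omega
              rw [hpow, hC0_def]
              have h1 : ‖x‖^(n-1) ≠ 0 := pow_ne_zero _ hxn.ne'
              field_simp
      refine hmono1.trans ?_
      have hA1eq : A1 = {x : EuclideanSpace ℝ (Fin n) | ‖x‖ ∈ Set.Ioc R M} := by
        rw [hA1_def]
        rfl
      have hψval : ∫ x in A1, C0/‖x‖^(n-1) = (n:ℝ)*V*((M-R)*C0) := by
        rw [hA1eq, radial_formula hn (fun r => C0/r^(n-1)) measurableSet_Ioc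
          (fun r hr => hR.trans hr.1), ← hV_def]
        congr 1
        have heqon : ∀ r ∈ Set.Ioc R M, r^(n-1) * (C0/r^(n-1)) = C0 := by
          intro r hr
          have h1 : r^(n-1) ≠ 0 := pow_ne_zero _ (hR.trans hr.1).ne'
          field_simp
        rw [setIntegral_congr_fun measurableSet_Ioc heqon, setIntegral_const,
          Real.volume_real_Ioc_of_le (by linarith), smul_eq_mul]
      rw [hψval]
      have hMR1 : ‖ξ‖*(M-R) ≤ 1 := by
        have hMle : M ≤ R + ‖ξ‖⁻¹ :=
          max_le (le_add_of_nonneg_right (inv_pos.mpr hν).le) (le_add_of_nonneg_left hR.le)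
        have h1 : M - R ≤ ‖ξ‖⁻¹ := by linarith
        calc ‖ξ‖*(M-R) ≤ ‖ξ‖*‖ξ‖⁻¹ := by
              exact mul_le_mul_of_nonneg_left h1 hν.le
          _ = 1 := mul_inv_cancel₀ hν.ne'
      have hkey : (M-R)*C0 ≤ 2*π*C_K := by
        rw [hC0_def]
        nlinarith [pi_pos, hCK]
      calc (n:ℝ)*V*((M-R)*C0) ≤ (n:ℝ)*V*(2*π*C_K) := by
            refine mul_le_mul_of_nonneg_left hkey (by positivity)
        _ = 2*π*((n:ℝ)*V)*C_K := by ring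
    -- Part 2 bound
    have hI2 : ‖∫ x in A, K x * e x‖ ≤
        ((n:ℝ)*V*diniNorm ω + 2^n*V*C_K + V*C_K)/2 := by
      have hBeq : B = {z : EuclideanSpace ℝ (Fin n) | z + y ∈ A} := rfl
      have hFA : IntegrableOn (fun x => K x * e (x - y)) A := by
        refine hIntA.neg.congr (Filter.Eventually.of_forall fun x => ?_)
        show -(K x * e x) = K x * e (x - y)
        rw [hey x]
        ring
      obtain ⟨hKeB0, hKeBval0⟩ := translate_aux (fun x => K x * e (x - y)) hAmeas y hFA
      rw [← hBeq] at hKeB0 hKeBval0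
      have hKeB : IntegrableOn (fun z => K (z + y) * e z) B := by
        refine hKeB0.congr (Filter.Eventually.of_forall fun z => ?_)
        show K (z + y) * e (z + y - y) = K (z + y) * e z
        rw [add_sub_cancel_right]
      have hKeBval : ∫ z in B, K (z + y) * e z = ∫ x in A, K x * e (x - y) := by
        rw [← hKeBval0]
        refine integral_congr_ae (Filter.Eventually.of_forall fun z => ?_)
        show K (z + y) * e z = K (z + y) * e (z + y - y)
        rw [add_sub_cancel_right]
      obtain ⟨hK'B0, -⟩ := translate_aux K hAmeas y hKA
      rw [← hBeq] at hK'B0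
      have hIA_eq : ∫ x in A, K x * e x = - ∫ x in A, K x * e (x - y) := by
        rw [← integral_neg]
        refine integral_congr_ae (Filter.Eventually.of_forall fun x => ?_)
        show K x * e x = -(K x * e (x - y))
        rw [hey x]
        ring
      have h2I : (∫ x in A, K x * e x) + (∫ x in A, K x * e x) =
          (∫ x in A, K x * e x) - ∫ z in B, K (z + y) * e z := by
        rw [hKeBval, hIA_eq]
        ring
      have hABmeas : MeasurableSet (A ∩ B) := hAmeas.inter hBmeas
      have hAdmeas : MeasurableSet (A \ B) := hAmeas.diff hBmeas
      have hBdmeas : MeasurableSet (B \ A) := hBmeas.diff hAmeas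
      have hsplitA : ∫ x in A, K x * e x =
          (∫ x in A ∩ B, K x * e x) + ∫ x in A \ B, K x * e x := by
        rw [← setIntegral_union (Set.disjoint_left.mpr fun x hx1 hx2 => hx2.2 hx1.2) hAdmeas
          (hIntA.mono_set Set.inter_subset_left) (hIntA.mono_set Set.diff_subset),
          Set.inter_union_diff]
      have hsplitB : ∫ z in B, K (z + y) * e z =
          (∫ z in A ∩ B, K (z + y) * e z) + ∫ z in B \ A, K (z + y) * e z := by
        rw [← setIntegral_union (Set.disjoint_left.mpr fun z hz1 hz2 => hz2.2 hz1.1) hBdmeas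
          (hKeB.mono_set Set.inter_subset_right) (hKeB.mono_set Set.diff_subset)]
        rw [show A ∩ B ∪ B \ A = B by rw [Set.inter_comm, Set.inter_union_diff]]
      have hdiffint1 : IntegrableOn (fun z => K z * e z) (A ∩ B) :=
        hIntA.mono_set Set.inter_subset_left
      have hdiffint2 : IntegrableOn (fun z => K (z+y) * e z) (A ∩ B) :=
        hKeB.mono_set Set.inter_subset_right
      have hcomb : (∫ x in A, K x * e x) - (∫ z in B, K (z + y) * e z) =
          (∫ z in A ∩ B, (K z - K (z + y)) * e z) + (∫ x in A \ B, K x * e x)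
            - ∫ z in B \ A, K (z + y) * e z := by
        rw [hsplitA, hsplitB]
        rw [show ∫ z in A ∩ B, (K z - K (z + y)) * e z
            = (∫ z in A ∩ B, K z * e z) - ∫ z in A ∩ B, K (z + y) * e z from by
          rw [← integral_sub hdiffint1 hdiffint2]
          refine integral_congr_ae (Filter.Eventually.of_forall fun z => ?_)
          ring]
        ring
      -- the Dini majorant machinery
      set ω' : ℝ → ℝ := fun t => ω (max t 0) with hω'_def
      have hω'mono : Monotone ω' := fun a b hab => hmono _ _ (le_max_right _ _) (max_le_max hab le_rfl)
      have hω'meas : Measurable ω' := hω'mono.measurable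
      have hω'nonneg : ∀ t, 0 ≤ ω' t := fun t => hωnn _ (le_max_right _ _)
      have hω'eq : ∀ t, 0 ≤ t → ω' t = ω t := fun t ht => by
        rw [hω'_def]
        simp only [max_eq_left ht]
      set g : EuclideanSpace ℝ (Fin n) → ℝ := fun z => ω' (‖y‖ / ‖z‖) / ‖z‖^n with hg_def
      have hgmeas : Measurable g :=
        (hω'meas.comp (measurable_const.div measurable_norm)).div (measurable_norm.pow_const n)
      have hgnn : ∀ z, 0 ≤ g z := fun z => div_nonneg (hω'nonneg _) (pow_nonneg (norm_nonneg _) n)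
      have hbM1 : ‖y‖ / M ≤ 1 := by
        rw [div_le_one hM0]
        linarith
      have hannmeas : ∀ N : ℕ,
          MeasurableSet {z : EuclideanSpace ℝ (Fin n) | ‖z‖ ∈ Set.Ioo M (N:ℝ)} :=
        fun N => measurable_norm measurableSet_Ioo
      have hannint : ∀ N : ℕ,
          IntegrableOn g {z : EuclideanSpace ℝ (Fin n) | ‖z‖ ∈ Set.Ioo M (N:ℝ)} := by
        intro N
        refine Measure.integrableOn_of_bounded (M := ω' (‖y‖/M) / M^n) ?_
          hgmeas.aestronglyMeasurable ?_
        · refine ne_of_lt (lt_of_le_of_lt (measure_mono fun z hz => ?_)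
            (measure_ball_lt_top (x := (0:EuclideanSpace ℝ (Fin n))) (r := (N:ℝ))))
          rw [Metric.mem_ball, dist_zero_right]
          exact hz.2
        · filter_upwards [self_mem_ae_restrict (hannmeas N)] with z hz
          have hz1 : M < ‖z‖ := hz.1
          rw [Real.norm_eq_abs, abs_of_nonneg (hgnn z)]
          exact div_le_div₀ (hω'nonneg _)
            (hω'mono (div_le_div_of_nonneg_left hbpos.le hM0 hz1.le))
            (pow_pos hM0 n) (pow_le_pow_left₀ hM0.le hz1.le n)
      have hannval : ∀ N : ℕ,
          ∫ z in {z : EuclideanSpace ℝ (Fin n) | ‖z‖ ∈ Set.Ioo M (N:ℝ)}, g z ≤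
            (n:ℝ)*V*diniNorm ω := by
        intro N
        have hrad := radial_formula hn (fun r => ω' (‖y‖/r) / r^n) measurableSet_Ioo
          (fun r (hr : r ∈ Set.Ioo M (N:ℝ)) => hM0.trans hr.1)
        rw [← hV_def] at hrad
        have heq0 : ∫ z in {z : EuclideanSpace ℝ (Fin n) | ‖z‖ ∈ Set.Ioo M (N:ℝ)}, g z =
            (n:ℝ)*V*∫ r in Set.Ioo M (N:ℝ), r^(n-1) * (ω' (‖y‖/r)/r^n) := hrad
        rw [heq0]
        refine mul_le_mul_of_nonneg_left ?_ (by positivity)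
        have heqon : ∀ r ∈ Set.Ioo M (N:ℝ), r^(n-1) * (ω' (‖y‖/r)/r^n) = ω (‖y‖/r) / r := by
          intro r hr
          have hr0 : 0 < r := hM0.trans hr.1
          rw [hω'eq _ (by positivity)]
          have hpow : r^n = r^(n-1) * r := by
            rw [← pow_succ]
            congr 1
            omega
          rw [hpow]
          have h1 : r^(n-1) ≠ 0 := pow_ne_zero _ hr0.ne'
          field_simp
        rw [setIntegral_congr_fun measurableSet_Ioo heqon]
        exact dini_aux hωint (fun t ht => div_nonneg (hωnn t ht.1.le) ht.1.le) hbpos hM0 hbM1 N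
      have hAunion : A = ⋃ N : ℕ, {z : EuclideanSpace ℝ (Fin n) | ‖z‖ ∈ Set.Ioo M (N:ℝ)} := by
        ext z
        simp only [Set.mem_iUnion, Set.mem_setOf_eq, Set.mem_Ioo, hA_def]
        constructor
        · intro h
          exact ⟨⌊‖z‖⌋₊+1, h, by push_cast; exact Nat.lt_floor_add_one _⟩
        · rintro ⟨N, h1, -⟩
          exact h1
      have hnvd : 0 ≤ (n:ℝ)*V*diniNorm ω := by positivity
      have hLsup : ∫⁻ z in A, ENNReal.ofReal (g z) ≤ ENNReal.ofReal ((n:ℝ)*V*diniNorm ω) := by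
        have hmon : Monotone (fun N : ℕ =>
            {z : EuclideanSpace ℝ (Fin n) | ‖z‖ ∈ Set.Ioo M (N:ℝ)}) := by
          intro a b hab z hz
          exact ⟨hz.1, hz.2.trans_le (Nat.cast_le.mpr hab)⟩
        rw [← withDensity_apply _ hAmeas, hAunion,
          hmon.directed_le.measure_iUnion]
        refine iSup_le fun N => ?_
        rw [withDensity_apply _ (hannmeas N),
          ← ofReal_integral_eq_lintegral_ofReal (hannint N) (Filter.Eventually.of_forall hgnn)]
        exact ENNReal.ofReal_le_ofReal (hannval N)
      have hgA : IntegrableOn g A := by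
        refine ⟨hgmeas.aestronglyMeasurable.restrict, ?_⟩
        rw [hasFiniteIntegral_iff_ofReal (Filter.Eventually.of_forall hgnn)]
        exact lt_of_le_of_lt hLsup ENNReal.ofReal_lt_top
      have hgAval : ∫ z in A, g z ≤ (n:ℝ)*V*diniNorm ω := by
        rw [integral_eq_lintegral_of_nonneg_ae (Filter.Eventually.of_forall hgnn)
          hgmeas.aestronglyMeasurable.restrict]
        exact ENNReal.toReal_le_of_le_ofReal hnvd hLsup
      obtain ⟨hgB, hgBval⟩ := translate_aux g hAmeas y hgA
      rw [← hBeq] at hgB hgBval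
      -- T1
      have hT1 : ‖∫ z in A ∩ B, (K z - K (z + y)) * e z‖ ≤ (n:ℝ)*V*diniNorm ω := by
        refine (norm_integral_le_integral_norm _).trans ?_
        have heqn : ∫ z in A ∩ B, ‖(K z - K (z + y)) * e z‖ =
            ∫ z in A ∩ B, ‖K z - K (z + y)‖ := by
          refine integral_congr_ae (Filter.Eventually.of_forall fun z => ?_)
          show ‖(K z - K (z + y)) * e z‖ = ‖K z - K (z + y)‖
          rw [norm_mul, hnorme, mul_one]
        rw [heqn]
        have hint1 : IntegrableOn (fun z => ‖K z - K (z + y)‖) (A ∩ B) :=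
          ((hKA.mono_set Set.inter_subset_left).sub
            (hK'B0.mono_set Set.inter_subset_right)).norm
        have hstep : ∫ z in A ∩ B, ‖K z - K (z + y)‖ ≤ ∫ z in A ∩ B, g (z + y) := by
          refine setIntegral_mono_on hint1 (hgB.mono_set Set.inter_subset_right) hABmeas
            fun z hz => ?_
          have hz2 : M < ‖z + y‖ := hz.2
          have hne : z + y ≠ 0 := by
            intro h0
            rw [h0, norm_zero] at hz2
            exact absurd hz2 (not_lt.mpr hM0.le)
          have h2y : 2*‖y‖ ≤ ‖z + y‖ := by
            rw [h2b]
            exact hνM.trans hz2.le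
          have hr := hreg (z + y) y hne h2y
          rw [add_sub_cancel_right] at hr
          refine hr.trans (le_of_eq ?_)
          show ω (‖y‖ / ‖z + y‖) / ‖z + y‖ ^ n = g (z + y)
          rw [show g (z+y) = ω' (‖y‖ / ‖z + y‖) / ‖z + y‖ ^ n from rfl,
            hω'eq _ (by positivity)]
        refine hstep.trans ?_
        have hstep2 : ∫ z in A ∩ B, g (z + y) ≤ ∫ z in B, g (z + y) :=
          setIntegral_mono_set hgB (Filter.Eventually.of_forall fun z => hgnn _)
            (HasSubset.Subset.eventuallyLE Set.inter_subset_right)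
        refine hstep2.trans ?_
        rw [hgBval]
        exact hgAval
      have hconst : (0:ℝ) ≤ C_K / M^n := by positivity
      -- T2
      have hT2 : ‖∫ x in A \ B, K x * e x‖ ≤ 2^n*V*C_K := by
        refine (norm_integral_le_integral_norm _).trans ?_
        have hsubCB : A \ B ⊆ Metric.closedBall (0:EuclideanSpace ℝ (Fin n)) (3/2*M) := by
          intro z hz
          rw [Metric.mem_closedBall, dist_zero_right]
          have h1 : ‖z + y‖ ≤ M := not_lt.mp hz.2
          calc ‖z‖ = ‖(z + y) - y‖ := by rw [add_sub_cancel_right]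
            _ ≤ ‖z + y‖ + ‖y‖ := norm_sub_le _ _
            _ ≤ M + M/2 := add_le_add h1 hbM2
            _ = 3/2*M := by ring
        have hfin : volume (A \ B) ≠ ∞ :=
          ne_of_lt (lt_of_le_of_lt (measure_mono hsubCB) measure_closedBall_lt_top)
        have hmono2 : ∫ x in A \ B, ‖K x * e x‖ ≤ ∫ x in A \ B, C_K/M^n := by
          refine setIntegral_mono_on ((hIntA.mono_set Set.diff_subset).norm)
            (integrableOn_const hfin) hAdmeas fun x hx => ?_
          have hx1 : M < ‖x‖ := hx.1
          have hx0 : x ≠ 0 := by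
            intro h0
            rw [h0, norm_zero] at hx1
            exact absurd hx1 (not_lt.mpr hM0.le)
          rw [norm_mul, hnorme, mul_one]
          exact (hsize x hx0).trans (div_le_div_of_nonneg_left hCK.le (pow_pos hM0 n)
            (pow_le_pow_left₀ hM0.le hx1.le n))
        refine hmono2.trans ?_
        rw [setIntegral_const, smul_eq_mul]
        have hvol : (volume (A \ B)).toReal ≤ (3/2*M)^n * V := by
          have h2 : volume (Metric.closedBall (0:EuclideanSpace ℝ (Fin n)) (3/2*M)) =
              ENNReal.ofReal ((3/2*M)^(Module.finrank ℝ (EuclideanSpace ℝ (Fin n)))) *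
                volume (Metric.ball (0:EuclideanSpace ℝ (Fin n)) 1) :=
            Measure.addHaar_closedBall (μ := volume) 0 (by positivity : (0:ℝ) ≤ 3/2*M)
          rw [finrank_euclideanSpace_fin] at h2
          calc (volume (A \ B)).toReal
              ≤ (volume (Metric.closedBall (0:EuclideanSpace ℝ (Fin n)) (3/2*M))).toReal :=
                ENNReal.toReal_mono (by
                  rw [h2]
                  exact ENNReal.mul_ne_top ENNReal.ofReal_ne_top measure_ball_lt_top.ne)
                  (measure_mono hsubCB)
            _ = (3/2*M)^n * V := by
                rw [h2, ENNReal.toReal_mul, ENNReal.toReal_ofReal (by positivity), hV_def]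
        calc (volume (A \ B)).toReal * (C_K/M^n) ≤ ((3/2*M)^n * V) * (C_K/M^n) :=
              mul_le_mul_of_nonneg_right hvol hconst
          _ = (3/2)^n * V * C_K := by
              rw [mul_pow]
              have hMn : (M:ℝ)^n ≠ 0 := (pow_pos hM0 n).ne'
              field_simp
          _ ≤ 2^n*V*C_K := by
              refine mul_le_mul_of_nonneg_right
                (mul_le_mul_of_nonneg_right (pow_le_pow_left₀ (by norm_num) (by norm_num) n) hV)
                hCK.le
      -- T3
      have hT3 : ‖∫ z in B \ A, K (z + y) * e z‖ ≤ V*C_K := by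
        refine (norm_integral_le_integral_norm _).trans ?_
        have hsubCB : B \ A ⊆ Metric.closedBall (0:EuclideanSpace ℝ (Fin n)) M := by
          intro z hz
          rw [Metric.mem_closedBall, dist_zero_right]
          exact not_lt.mp hz.2
        have hfin : volume (B \ A) ≠ ∞ :=
          ne_of_lt (lt_of_le_of_lt (measure_mono hsubCB) measure_closedBall_lt_top)
        have hmono3 : ∫ z in B \ A, ‖K (z + y) * e z‖ ≤ ∫ z in B \ A, C_K/M^n := by
          refine setIntegral_mono_on ((hKeB.mono_set Set.diff_subset).norm)
            (integrableOn_const hfin) hBdmeas fun z hz => ?_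
          have hz1 : M < ‖z + y‖ := hz.1
          have hne : z + y ≠ 0 := by
            intro h0
            rw [h0, norm_zero] at hz1
            exact absurd hz1 (not_lt.mpr hM0.le)
          rw [norm_mul, hnorme, mul_one]
          exact (hsize _ hne).trans (div_le_div_of_nonneg_left hCK.le (pow_pos hM0 n)
            (pow_le_pow_left₀ hM0.le hz1.le n))
        refine hmono3.trans ?_
        rw [setIntegral_const, smul_eq_mul]
        have hvol : (volume (B \ A)).toReal ≤ M^n * V := by
          have h2 : volume (Metric.closedBall (0:EuclideanSpace ℝ (Fin n)) M) =
              ENNReal.ofReal (M^(Module.finrank ℝ (EuclideanSpace ℝ (Fin n)))) *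
                volume (Metric.ball (0:EuclideanSpace ℝ (Fin n)) 1) :=
            Measure.addHaar_closedBall (μ := volume) 0 hM0.le
          rw [finrank_euclideanSpace_fin] at h2
          calc (volume (B \ A)).toReal
              ≤ (volume (Metric.closedBall (0:EuclideanSpace ℝ (Fin n)) M)).toReal :=
                ENNReal.toReal_mono (by
                  rw [h2]
                  exact ENNReal.mul_ne_top ENNReal.ofReal_ne_top measure_ball_lt_top.ne)
                  (measure_mono hsubCB)
            _ = M^n * V := by
                rw [h2, ENNReal.toReal_mul, ENNReal.toReal_ofReal (by positivity), hV_def]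
        calc (volume (B \ A)).toReal * (C_K/M^n) ≤ (M^n * V) * (C_K/M^n) :=
              mul_le_mul_of_nonneg_right hvol hconst
          _ = V*C_K := by
              have hMn : (M:ℝ)^n ≠ 0 := (pow_pos hM0 n).ne'
              field_simp
      -- assemble
      have hfinal : (2:ℝ) * ‖∫ x in A, K x * e x‖ ≤
          (n:ℝ)*V*diniNorm ω + 2^n*V*C_K + V*C_K := by
        have hn2 : (2:ℝ) * ‖∫ x in A, K x * e x‖ =
            ‖(∫ x in A, K x * e x) + (∫ x in A, K x * e x)‖ := by
          rw [← two_smul ℝ (∫ x in A, K x * e x), norm_smul]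
          simp
        rw [hn2, h2I, hcomb]
        calc ‖(∫ z in A ∩ B, (K z - K (z + y)) * e z) + (∫ x in A \ B, K x * e x)
              - ∫ z in B \ A, K (z + y) * e z‖
            ≤ ‖(∫ z in A ∩ B, (K z - K (z + y)) * e z) + (∫ x in A \ B, K x * e x)‖
              + ‖∫ z in B \ A, K (z + y) * e z‖ := norm_sub_le _ _
          _ ≤ ‖∫ z in A ∩ B, (K z - K (z + y)) * e z‖ + ‖∫ x in A \ B, K x * e x‖
              + ‖∫ z in B \ A, K (z + y) * e z‖ := by
              have h3 := norm_add_le (∫ z in A ∩ B, (K z - K (z + y)) * e z)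
                (∫ x in A \ B, K x * e x)
              linarith
          _ ≤ (n:ℝ)*V*diniNorm ω + 2^n*V*C_K + V*C_K := by
              linarith [hT1, hT2, hT3]
      linarith [hfinal]
    calc ‖∫ x in S, K x * e x‖
        ≤ ‖∫ x in A1, K x * e x‖ + ‖∫ x in A, K x * e x‖ := by
          rw [hsplit]; exact norm_add_le _ _
      _ ≤ 2*π*((n:ℝ)*V)*C_K + ((n:ℝ)*V*diniNorm ω + 2^n*V*C_K + V*C_K)/2 :=
          add_le_add hI1 hI2
      _ ≤ c * (C_K + diniNorm ω) := by
          rw [hc_def]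
          have h1 : (0:ℝ) ≤ (n:ℝ) := Nat.cast_nonneg n
          have h2 : (0:ℝ) ≤ 2^n := by positivity
          nlinarith [mul_nonneg hV hdini, mul_nonneg hV hCK.le,
            mul_nonneg (mul_nonneg h1 hV) hdini, mul_nonneg (mul_nonneg h1 hV) hCK.le,
            mul_nonneg (mul_nonneg h2 hV) hdini, mul_nonneg (mul_nonneg h2 hV) hCK.le,
            pi_pos, mul_nonneg (mul_nonneg (mul_nonneg h1 hV) hdini) pi_pos.le,
            mul_nonneg (mul_nonneg (mul_nonneg h1 hV) hCK.le) pi_pos.le, hdini, hCK.le]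

end
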